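/- arXiv:1605.06138 — 2 statements merged into one kernel-verified Lean document; each statement's English description precedes it below -/
import Mathlib

section
/- Let F ∈ ℝ^N, V an N × m matrix with orthonormal columns (VᵀV = I), and P an N × m selection matrix with PᵀV invertible. Define F̄ = V (PᵀV)⁻¹ Pᵀ F. Then ‖F − F̄‖₂ ≤ ‖(PᵀV)⁻¹‖₂ · ‖(I − VVᵀ)F‖₂, where ‖·‖₂ denotes the Euclidean vector norm and the spectral (operator) matrix norm respectively. -/
open Matrix

private lemma deim_aux (c R2 Z2 W2 E2 : ℝ) (hR2 : 0 ≤ R2) (hZ2 : 0 ≤ Z2)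
    (hc1 : 1 ≤ c) (hE : E2 = R2 - Z2) (hCS : Z2 ^ 2 ≤ R2 * (Z2 - W2))
    (hZW : Z2 ≤ c ^ 2 * W2) : R2 ≤ c ^ 2 * E2 := by
  rcases eq_or_lt_of_le hZ2 with hZ0 | hZpos
  · have h1 : (1 : ℝ) ≤ c ^ 2 := one_le_pow₀ hc1
    rw [hE, ← hZ0, sub_zero]
    nlinarith
  · have h1 : c ^ 2 * Z2 ^ 2 ≤ c ^ 2 * (R2 * (Z2 - W2)) :=
      mul_le_mul_of_nonneg_left hCS (by positivity)
    have h2 : R2 * Z2 ≤ R2 * (c ^ 2 * W2) := mul_le_mul_of_nonneg_left hZW hR2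
    have h3 : (c ^ 2 * Z2 + R2) * Z2 ≤ (c ^ 2 * R2) * Z2 := by nlinarith
    have h4 : c ^ 2 * Z2 + R2 ≤ c ^ 2 * R2 := le_of_mul_le_mul_right h3 hZpos
    rw [hE]
    nlinarith

theorem deim_error_bound (N m : ℕ) (hN : 0 < N) (hm : 0 < m) (hmN : m ≤ N)
    (V P : Matrix (Fin N) (Fin m) ℝ)
    (hV : Vᵀ * V = 1)
    (ρ : Fin m → Fin N) (hρ : Function.Injective ρ)
    (hP : ∀ i j, P i j = if i = ρ j then (1 : ℝ) else 0)
    (hinv : IsUnit (Pᵀ * V)) (F : EuclideanSpace ℝ (Fin N)) :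
    ‖F - (WithLp.equiv 2 (Fin N → ℝ)).symm ((V * (Pᵀ * V)⁻¹ * Pᵀ).mulVec F)‖ ≤
      ‖Matrix.toEuclideanCLM (𝕜 := ℝ) ((Pᵀ * V)⁻¹)‖ *
        ‖(WithLp.equiv 2 (Fin N → ℝ)).symm
            (((1 : Matrix (Fin N) (Fin N) ℝ) - V * Vᵀ).mulVec F)‖ := by
  classical
  set A : Matrix (Fin m) (Fin m) ℝ := Pᵀ * V with hA
  set c : ℝ := ‖Matrix.toEuclideanCLM (𝕜 := ℝ) (A⁻¹)‖ with hc
  have hcnn : 0 ≤ c := norm_nonneg _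
  have hdet : IsUnit A.det := (Matrix.isUnit_iff_isUnit_det A).mp hinv
  set f : Fin N → ℝ := WithLp.equiv 2 (Fin N → ℝ) F with hf
  set M : Matrix (Fin N) (Fin N) ℝ := V * A⁻¹ * Pᵀ with hM
  set r : Fin N → ℝ := f - M *ᵥ f with hr
  set E : Fin N → ℝ := ((1 : Matrix (Fin N) (Fin N) ℝ) - V * Vᵀ) *ᵥ f with hE
  set z : Fin m → ℝ := -(Vᵀ *ᵥ r) with hz
  set g : Fin N → ℝ := V *ᵥ z with hg
  -- the norm of a Euclidean vector squared
  have hnorm : ∀ (k : ℕ) (v : Fin k → ℝ),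
      ‖(WithLp.equiv 2 (Fin k → ℝ)).symm v‖ ^ 2 = ∑ i, v i ^ 2 := by
    intro k v
    rw [EuclideanSpace.norm_eq, Real.sq_sqrt (by positivity)]
    simp [WithLp.equiv_symm_apply, PiLp.toLp_apply, sq_abs]
  -- orthonormality of columns in dot-product form
  have sumVV : ∀ x y : Fin m → ℝ, (V *ᵥ x) ⬝ᵥ (V *ᵥ y) = x ⬝ᵥ y := by
    intro x y
    rw [Matrix.dotProduct_mulVec, ← Matrix.mulVec_transpose, Matrix.mulVec_mulVec, hV,
      Matrix.one_mulVec]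
  -- the action of Pᵀ
  have hPapp : ∀ (x : Fin N → ℝ) (j : Fin m), (Pᵀ *ᵥ x) j = x (ρ j) := by
    intro x j
    simp only [Matrix.mulVec, dotProduct, Matrix.transpose_apply, hP]
    rw [Finset.sum_eq_single (ρ j)]
    · simp
    · intro b _ hb; simp [hb]
    · simp
  -- matrix identities
  have hPM : Pᵀ * M = Pᵀ := by
    rw [hM, ← Matrix.mul_assoc, ← Matrix.mul_assoc, ← hA, Matrix.mul_nonsing_inv A hdet,
      Matrix.one_mul]
  have hVVM : V * Vᵀ * M = M := by
    rw [hM, ← Matrix.mul_assoc, ← Matrix.mul_assoc, Matrix.mul_assoc V Vᵀ V, hV,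
      Matrix.mul_one]
  -- r vanishes on the interpolation indices
  have hPr : Pᵀ *ᵥ r = 0 := by
    rw [hr, Matrix.mulVec_sub, Matrix.mulVec_mulVec, hPM, sub_self]
  have hrρ : ∀ j, r (ρ j) = 0 := by
    intro j
    have := congrFun hPr j
    rwa [hPapp r j] at this
  -- E = r + g
  have hErg : E = r + g := by
    have hVz : g = M *ᵥ f - (V * Vᵀ) *ᵥ f := by
      rw [hg, hz, Matrix.mulVec_neg, Matrix.mulVec_mulVec, hr, Matrix.mulVec_sub,
        Matrix.mulVec_mulVec, hVVM]
      abel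
    rw [hE, Matrix.sub_mulVec, Matrix.one_mulVec, hVz, hr]
    abel
  -- squared sums
  set R2 : ℝ := ∑ i, r i ^ 2 with hR2
  set E2 : ℝ := ∑ i, E i ^ 2 with hE2
  set Z2 : ℝ := ∑ j, z j ^ 2 with hZ2
  set W2 : ℝ := ∑ j, (A *ᵥ z) j ^ 2 with hW2
  have hR2nn : 0 ≤ R2 := by positivity
  have hZ2nn : 0 ≤ Z2 := by positivity
  have hW2nn : 0 ≤ W2 := by positivity
  have dot_sq : ∀ (k : ℕ) (v : Fin k → ℝ), v ⬝ᵥ v = ∑ i, v i ^ 2 := by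
    intro k v; simp [dotProduct, sq]
  -- ∑ g² = Z2
  have hgsq : ∑ i, g i ^ 2 = Z2 := by
    rw [hZ2, ← dot_sq, ← dot_sq, hg, sumVV]
  -- ∑ r g = -Z2
  have hrg : ∑ i, r i * g i = -Z2 := by
    have h1 : r ⬝ᵥ g = (Vᵀ *ᵥ r) ⬝ᵥ z := by
      rw [hg, Matrix.dotProduct_mulVec, ← Matrix.mulVec_transpose]
    have h2 : (Vᵀ *ᵥ r) ⬝ᵥ z = -(z ⬝ᵥ z) := by
      rw [show Vᵀ *ᵥ r = -z by rw [hz, neg_neg]]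
      simp [neg_dotProduct]
    calc ∑ i, r i * g i = r ⬝ᵥ g := by simp [dotProduct]
      _ = -(z ⬝ᵥ z) := h1.trans h2
      _ = -Z2 := by rw [dot_sq, hZ2]
  -- E2 = R2 - Z2
  have hE2eq : E2 = R2 - Z2 := by
    have : ∀ i, E i ^ 2 = r i ^ 2 + 2 * (r i * g i) + g i ^ 2 := by
      intro i; rw [hErg]; simp [Pi.add_apply]; ring
    rw [hE2, Finset.sum_congr rfl fun i _ => this i]
    rw [Finset.sum_add_distrib, Finset.sum_add_distrib, ← Finset.mul_sum, hrg, hgsq,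
      ← hR2]
    ring
  -- operator norm bound: ∑ y² ≤ c² ∑ (A y)²
  have hop : ∀ y : Fin m → ℝ, (∑ j, y j ^ 2) ≤ c ^ 2 * ∑ j, (A *ᵥ y) j ^ 2 := by
    intro y
    have h1 : A⁻¹ *ᵥ (A *ᵥ y) = y := by
      rw [Matrix.mulVec_mulVec, Matrix.nonsing_inv_mul A hdet, Matrix.one_mulVec]
    have h2 : ‖(WithLp.equiv 2 (Fin m → ℝ)).symm y‖ ≤
        c * ‖(WithLp.equiv 2 (Fin m → ℝ)).symm (A *ᵥ y)‖ := by
      calc ‖(WithLp.equiv 2 (Fin m → ℝ)).symm y‖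
          = ‖Matrix.toEuclideanCLM (𝕜 := ℝ) (A⁻¹)
              ((WithLp.equiv 2 (Fin m → ℝ)).symm (A *ᵥ y))‖ := by
            rw [WithLp.equiv_symm_apply, Matrix.toEuclideanCLM_toLp, h1]
        _ ≤ c * ‖(WithLp.equiv 2 (Fin m → ℝ)).symm (A *ᵥ y)‖ :=
            (Matrix.toEuclideanCLM (𝕜 := ℝ) (A⁻¹)).le_opNorm _
    calc (∑ j, y j ^ 2) = ‖(WithLp.equiv 2 (Fin m → ℝ)).symm y‖ ^ 2 := (hnorm m y).symm
      _ ≤ (c * ‖(WithLp.equiv 2 (Fin m → ℝ)).symm (A *ᵥ y)‖) ^ 2 :=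
          pow_le_pow_left₀ (norm_nonneg _) h2 2
      _ = c ^ 2 * ∑ j, (A *ᵥ y) j ^ 2 := by rw [mul_pow, hnorm]
  -- the image set
  set s : Finset (Fin N) := Finset.univ.image ρ with hs
  have himg : ∀ y : Fin m → ℝ, ∑ i ∈ s, (V *ᵥ y) i ^ 2 = ∑ j, (A *ᵥ y) j ^ 2 := by
    intro y
    rw [hs, Finset.sum_image (fun a _ b _ h => hρ h)]
    refine Finset.sum_congr rfl fun j _ => ?_
    rw [hA, ← Matrix.mulVec_mulVec, hPapp]
  -- ∑ (A y)² ≤ ∑ y²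
  have hAle : ∀ y : Fin m → ℝ, (∑ j, (A *ᵥ y) j ^ 2) ≤ ∑ j, y j ^ 2 := by
    intro y
    rw [← himg y]
    calc (∑ i ∈ s, (V *ᵥ y) i ^ 2) ≤ ∑ i, (V *ᵥ y) i ^ 2 :=
        Finset.sum_le_sum_of_subset_of_nonneg (Finset.subset_univ s)
          (fun i _ _ => by positivity)
      _ = ∑ j, y j ^ 2 := by rw [← dot_sq, sumVV, dot_sq]
  -- c ≥ 1
  have hc1 : 1 ≤ c := by
    set y0 : Fin m → ℝ := Pi.single ⟨0, hm⟩ 1 with hy0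
    have h1 : ∑ j, y0 j ^ 2 = 1 := by
      have h2 : ∀ j, y0 j ^ 2 = if j = (⟨0, hm⟩ : Fin m) then (1 : ℝ) else 0 := by
        intro j
        by_cases h : j = (⟨0, hm⟩ : Fin m) <;> simp [hy0, Pi.single_apply, h]
      simp [h2]
    have h2 := hop y0
    have h3 := hAle y0
    rw [h1] at h2 h3
    nlinarith [sq_nonneg (c - 1), sq_nonneg c]
  -- Cauchy-Schwarz on the complement
  have hCS : Z2 ^ 2 ≤ R2 * (Z2 - W2) := by
    have hsum_s : ∑ i ∈ s, r i * g i = 0 := by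
      refine Finset.sum_eq_zero fun i hi => ?_
      obtain ⟨j, _, hj⟩ := Finset.mem_image.mp hi
      rw [← hj, hrρ j, zero_mul]
    have hsplit : ∑ i ∈ sᶜ, r i * g i = -Z2 := by
      have := Finset.sum_add_sum_compl s fun i => r i * g i
      rw [hsum_s, zero_add] at this
      rw [this, hrg]
    have hgc : ∑ i ∈ sᶜ, g i ^ 2 = Z2 - W2 := by
      have h1 := Finset.sum_add_sum_compl s fun i => g i ^ 2
      have h2 : ∑ i ∈ s, g i ^ 2 = W2 := by
        rw [hg, himg z, hW2]
      rw [h2, hgsq] at h1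
      linarith
    have hrc : (∑ i ∈ sᶜ, r i ^ 2) ≤ R2 :=
      Finset.sum_le_sum_of_subset_of_nonneg (Finset.subset_univ sᶜ)
        (fun i _ _ => by positivity)
    have hcs := Finset.sum_mul_sq_le_sq_mul_sq sᶜ r g
    rw [hsplit, hgc] at hcs
    have h0 : 0 ≤ Z2 - W2 := by rw [← hgc]; positivity
    calc Z2 ^ 2 = (-Z2) ^ 2 := by ring
      _ ≤ (∑ i ∈ sᶜ, r i ^ 2) * (Z2 - W2) := hcs
      _ ≤ R2 * (Z2 - W2) := mul_le_mul_of_nonneg_right hrc h0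
  -- finish
  have hL2 : ‖F - (WithLp.equiv 2 (Fin N → ℝ)).symm (M *ᵥ F)‖ ^ 2 = R2 := by
    have h1 : F - (WithLp.equiv 2 (Fin N → ℝ)).symm (M *ᵥ F)
        = (WithLp.equiv 2 (Fin N → ℝ)).symm r := by
      rw [hr, show (WithLp.equiv 2 (Fin N → ℝ)).symm (f - M *ᵥ f) = (WithLp.equiv 2 (Fin N → ℝ)).symm f - (WithLp.equiv 2 (Fin N → ℝ)).symm (M *ᵥ f) from rfl, show M *ᵥ f = M *ᵥ F from rfl, hf,
        Equiv.symm_apply_apply]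
    rw [h1, hnorm, hR2]
  have hRn2 : ‖(WithLp.equiv 2 (Fin N → ℝ)).symm
      (((1 : Matrix (Fin N) (Fin N) ℝ) - V * Vᵀ) *ᵥ F)‖ ^ 2 = E2 := by
    have h1 : (WithLp.equiv 2 (Fin N → ℝ)).symm
        (((1 : Matrix (Fin N) (Fin N) ℝ) - V * Vᵀ) *ᵥ F)
        = (WithLp.equiv 2 (Fin N → ℝ)).symm E := by
      rw [hE, show ((1 : Matrix (Fin N) (Fin N) ℝ) - V * Vᵀ) *ᵥ f
        = ((1 : Matrix (Fin N) (Fin N) ℝ) - V * Vᵀ) *ᵥ F from rfl]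
    rw [h1, hnorm, hE2]
  have hopz : Z2 ≤ c ^ 2 * W2 := by
    have h := hop z
    rwa [← hZ2, ← hW2] at h
  -- abstract away the bodies of the let-definitions
  clear_value A c f M r E z g R2 E2 Z2 W2
  -- combine: R2 ≤ c² E2
  have hkey : R2 ≤ c ^ 2 * E2 := deim_aux c R2 Z2 W2 E2 hR2nn hZ2nn hc1 hE2eq hCS hopz
  calc ‖F - (WithLp.equiv 2 (Fin N → ℝ)).symm (M *ᵥ F)‖
      = Real.sqrt R2 := by rw [← hL2, Real.sqrt_sq (norm_nonneg _)]
    _ ≤ Real.sqrt (c ^ 2 * E2) := Real.sqrt_le_sqrt hkey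
    _ = c * Real.sqrt E2 := by
        rw [Real.sqrt_mul (by positivity), Real.sqrt_sq hcnn]
    _ = c * ‖(WithLp.equiv 2 (Fin N → ℝ)).symm
        (((1 : Matrix (Fin N) (Fin N) ℝ) - V * Vᵀ) *ᵥ F)‖ := by
        rw [← hRn2, Real.sqrt_sq (norm_nonneg _)]
end

section
/- Inf-sup stability of the enriched reduced space: let X and M be finite-dimensional real inner product spaces and b : X × M → ℝ a bilinear form satisfying the discrete inf-sup condition: there exists γ_h > 0 such that for every 0 ≠ q ∈ M there exists 0 ≠ v ∈ X with b(v,q) ≥ γ_h ‖v‖_X ‖q‖_M. Let M_R ⊆ M be a subspace and suppose X_R ⊆ X is a subspace containing, for every q in a spanning set of M_R, the supremizer s(q) ∈ X defined by ⟨s(q), v⟩_X = b(v, q) for all v ∈ X, and suppose q ↦ s(q) is linear. Then for every 0 ≠ q_R ∈ M_R, sup_{0 ≠ v_R ∈ X_R} b(v_R, q_R)/(‖v_R‖_X ‖q_R‖_M) ≥ γ_h; i.e., the reduced pair (X_R, M_R) inherits the inf-sup constant γ_h. -/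
theorem enriched_space_inf_sup
    (X M : Type*) [NormedAddCommGroup X] [InnerProductSpace ℝ X] [FiniteDimensional ℝ X]
    [NormedAddCommGroup M] [InnerProductSpace ℝ M] [FiniteDimensional ℝ M]
    (b : X →ₗ[ℝ] M →ₗ[ℝ] ℝ)
    (γ : ℝ) (hγ : 0 < γ)
    (hinfsup : ∀ q : M, q ≠ 0 → ∃ v : X, v ≠ 0 ∧ γ * (‖v‖ * ‖q‖) ≤ b v q)
    (s : M →ₗ[ℝ] X) (hs : ∀ (q : M) (v : X), (inner ℝ (s q) v : ℝ) = b v q)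
    (MR : Submodule ℝ M) (XR : Submodule ℝ X)
    (hsub : ∀ q ∈ MR, s q ∈ XR) :
    ∀ qR ∈ MR, qR ≠ 0 →
      γ ≤ sSup {y : ℝ | ∃ vR ∈ XR, vR ≠ 0 ∧ y = b vR qR / (‖vR‖ * ‖qR‖)} := by
  intro qR hqR hne
  obtain ⟨v, hv, hvle⟩ := hinfsup qR hne
  have hq0 : (0:ℝ) < ‖qR‖ := norm_pos_iff.mpr hne
  have hv0 : (0:ℝ) < ‖v‖ := norm_pos_iff.mpr hv
  -- γ ‖qR‖ ≤ ‖s qR‖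
  have hcs : (b v qR : ℝ) ≤ ‖s qR‖ * ‖v‖ := by
    rw [← hs qR v]; exact real_inner_le_norm _ _
  have key : γ * ‖qR‖ ≤ ‖s qR‖ := by
    have := hvle.trans hcs
    nlinarith
  have hs0 : s qR ≠ 0 := by
    intro h
    rw [h, norm_zero] at key
    nlinarith
  have hsn : (0:ℝ) < ‖s qR‖ := norm_pos_iff.mpr hs0
  -- the element
  have hmem : ‖s qR‖ / ‖qR‖ ∈ {y : ℝ | ∃ vR ∈ XR, vR ≠ 0 ∧ y = b vR qR / (‖vR‖ * ‖qR‖)} := by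
    refine ⟨s qR, hsub qR hqR, hs0, ?_⟩
    have : (b (s qR) qR : ℝ) = ‖s qR‖ ^ 2 := by
      rw [← hs qR (s qR), real_inner_self_eq_norm_sq]
    rw [this]
    field_simp
  -- bounded above
  have hbdd : BddAbove {y : ℝ | ∃ vR ∈ XR, vR ≠ 0 ∧ y = b vR qR / (‖vR‖ * ‖qR‖)} := by
    refine ⟨‖s qR‖ / ‖qR‖, ?_⟩
    rintro y ⟨vR, _, hvR, rfl⟩
    have hvRn : (0:ℝ) < ‖vR‖ := norm_pos_iff.mpr hvR
    have hb : (b vR qR : ℝ) ≤ ‖s qR‖ * ‖vR‖ := by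
      rw [← hs qR vR]; exact real_inner_le_norm _ _
    rw [div_le_div_iff₀ (by positivity) hq0]
    nlinarith
  have hge : γ ≤ ‖s qR‖ / ‖qR‖ := (le_div_iff₀ hq0).mpr key
  exact hge.trans (le_csSup hbdd hmem)
end
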